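/- (Tracking Error Upper Bound) Let (G_t)_{t≥0} and (m_t)_{t≥0} be sequences in ℝ^d with m_t = β_t m_{t-1} + (1 - β_t) G_t for all t ≥ 1, where β_t ∈ [0, β_max] for all t and 0 < β_max < 1, and define the tracking error δ_t = m_t - G_t. Assume the gradients are bounded: there is M > 0 with ‖G_t‖ ≤ M for all t ≥ 0, and ‖m_0‖ ≤ M. Then with C = 2/(1-β_max)², limsup_{T→∞} (1/T) Σ_{t=1}^T ‖δ_t‖² ≤ C · limsup_{T→∞} (1/T) Σ_{t=1}^T β_t² ‖G_t - G_{t-1}‖². -/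

import Mathlib

open Filter

set_option maxHeartbeats 1000000

/-- Theorem 1 (Tracking Error Upper Bound): for the adaptive-momentum updates
`m_t = β_t m_{t-1} + (1-β_t) G_t` with `β_t ∈ [0, β_max]`, `β_max < 1`,
tracking error `δ_t = m_t - G_t`, and uniformly bounded gradients, with
`C = 2/(1-β_max)²`,
`limsup_T (1/T) Σ_{t=1}^T ‖δ_t‖² ≤ C · limsup_T (1/T) Σ_{t=1}^T β_t² ‖G_t - G_{t-1}‖²`. -/
theorem tracking_error_upper_bound {d : ℕ}
    (G m δ : ℕ → EuclideanSpace ℝ (Fin d)) (β : ℕ → ℝ) (βmax : ℝ)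
    (hβmax0 : 0 < βmax) (hβmax1 : βmax < 1)
    (hβ : ∀ t : ℕ, β t ∈ Set.Icc (0 : ℝ) βmax)
    (hrec : ∀ t : ℕ, m (t + 1) = β (t + 1) • m t + (1 - β (t + 1)) • G (t + 1))
    (hδ : ∀ t : ℕ, δ t = m t - G t)
    (M : ℝ) (hM : 0 < M) (hG : ∀ t : ℕ, ‖G t‖ ≤ M) (hm0 : ‖m 0‖ ≤ M) :
    limsup (fun T : ℕ => (1 / (T : ℝ)) * ∑ t ∈ Finset.Icc 1 T, ‖δ t‖ ^ 2) atTop ≤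
      (2 / (1 - βmax) ^ 2) *
        limsup (fun T : ℕ =>
          (1 / (T : ℝ)) * ∑ t ∈ Finset.Icc 1 T, (β t) ^ 2 * ‖G t - G (t - 1)‖ ^ 2) atTop := by
  have h1m : (0 : ℝ) < 1 - βmax := by linarith
  -- norm bounds
  have hm : ∀ t, ‖m t‖ ≤ M := by
    intro t
    induction t with
    | zero => exact hm0
    | succ t ih =>
      obtain ⟨hb0, hb1⟩ := hβ (t + 1)
      have h1 := mul_le_mul_of_nonneg_left ih hb0
      have h2 := mul_le_mul_of_nonneg_left (hG (t + 1))
        (by linarith : (0:ℝ) ≤ 1 - β (t + 1))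
      calc ‖m (t+1)‖ = ‖β (t+1) • m t + (1 - β (t+1)) • G (t+1)‖ := by rw [hrec t]
        _ ≤ ‖β (t+1) • m t‖ + ‖(1 - β (t+1)) • G (t+1)‖ := norm_add_le _ _
        _ = |β (t+1)| * ‖m t‖ + |1 - β (t+1)| * ‖G (t+1)‖ := by
            rw [norm_smul, norm_smul, Real.norm_eq_abs, Real.norm_eq_abs]
        _ = β (t+1) * ‖m t‖ + (1 - β (t+1)) * ‖G (t+1)‖ := by
            rw [abs_of_nonneg hb0, abs_of_nonneg (by linarith)]
        _ ≤ M := by linarith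
  have hδb : ∀ t, ‖δ t‖ ≤ 2 * M := by
    intro t
    rw [hδ t]
    calc ‖m t - G t‖ ≤ ‖m t‖ + ‖G t‖ := norm_sub_le _ _
      _ ≤ 2 * M := by linarith [hm t, hG t]
  -- one-step inequality
  have key : ∀ t : ℕ, (1 - βmax) * ‖δ (t+1)‖^2 ≤
      (1 - βmax) * βmax * ‖δ t‖^2 + (β (t+1))^2 * ‖G (t+1) - G t‖^2 := by
    intro t
    obtain ⟨hb0, hb1⟩ := hβ (t + 1)
    have hδ1 : δ (t+1) = β (t+1) • (δ t - (G (t+1) - G t)) := by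
      rw [hδ, hδ, hrec t]
      module
    have hnorm : ‖δ (t+1)‖ ≤ β (t+1) * (‖δ t‖ + ‖G (t+1) - G t‖) := by
      rw [hδ1, norm_smul, Real.norm_eq_abs, abs_of_nonneg hb0]
      have := norm_sub_le (δ t) (G (t+1) - G t)
      nlinarith [norm_nonneg (δ t - (G (t+1) - G t))]
    set a := ‖δ t‖ with ha'
    set b := ‖G (t+1) - G t‖ with hb'
    have ha : 0 ≤ a := norm_nonneg _
    have hb : 0 ≤ b := norm_nonneg _
    have hd0 : 0 ≤ ‖δ (t+1)‖ := norm_nonneg _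
    have h1 : ‖δ (t+1)‖^2 ≤ (β (t+1) * (a + b))^2 := by
      apply pow_le_pow_left₀ hd0 hnorm
    have h2 : (β (t+1))^2 ≤ βmax^2 := by nlinarith
    nlinarith [mul_nonneg (sq_nonneg (β (t+1)))
        (mul_nonneg hβmax0.le (sq_nonneg ((1-βmax)*a - βmax*b))),
      mul_nonneg (by nlinarith : (0:ℝ) ≤ βmax^2 - (β (t+1))^2)
        (mul_nonneg (mul_nonneg h1m.le hβmax0.le) (sq_nonneg a)),
      mul_pos hβmax0 hβmax0,
      mul_le_mul_of_nonneg_left h1 h1m.le,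
      sq_nonneg (a + b), mul_nonneg ha hb]
  -- summed inequality
  have sumkey : ∀ T : ℕ, (1 - βmax) * ∑ t ∈ Finset.range T, ‖δ (t+1)‖^2 ≤
      (1 - βmax) * βmax * ∑ t ∈ Finset.range T, ‖δ t‖^2 +
      ∑ t ∈ Finset.range T, (β (t+1))^2 * ‖G (t+1) - G t‖^2 := by
    intro T
    induction T with
    | zero => simp
    | succ T ih =>
      rw [Finset.sum_range_succ, Finset.sum_range_succ, Finset.sum_range_succ]
      have := key T
      nlinarith
  have hR : ∀ T : ℕ, ∑ t ∈ Finset.range T, ‖δ t‖^2 ≤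
      ‖δ 0‖^2 + ∑ t ∈ Finset.range T, ‖δ (t+1)‖^2 := by
    intro T
    have h1 : ∑ t ∈ Finset.range T, ‖δ t‖^2 ≤ ∑ t ∈ Finset.range (T+1), ‖δ t‖^2 :=
      Finset.sum_le_sum_of_subset_of_nonneg
        (Finset.range_subset_range.2 (Nat.le_succ T))
        (fun i _ _ => sq_nonneg _)
    rw [Finset.sum_range_succ'] at h1
    linarith
  set c0 : ℝ := βmax * ‖δ 0‖^2 / (1 - βmax) with hc0
  set K2 : ℝ := 1 / (1 - βmax)^2 with hK2
  have hc0n : 0 ≤ c0 := by positivity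
  have hK2n : 0 ≤ K2 := by positivity
  have Pbound : ∀ T : ℕ, ∑ t ∈ Finset.range T, ‖δ (t+1)‖^2 ≤
      c0 + K2 * ∑ t ∈ Finset.range T, (β (t+1))^2 * ‖G (t+1) - G t‖^2 := by
    intro T
    have h1 := sumkey T
    have h2 := mul_le_mul_of_nonneg_left (hR T)
      (mul_nonneg h1m.le hβmax0.le)
    have hpos : (0:ℝ) < (1 - βmax)^2 := by positivity
    have h3 : (1 - βmax)^2 * ∑ t ∈ Finset.range T, ‖δ (t+1)‖^2 ≤
        (1 - βmax) * βmax * ‖δ 0‖^2 +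
        ∑ t ∈ Finset.range T, (β (t+1))^2 * ‖G (t+1) - G t‖^2 := by nlinarith
    rw [hc0, hK2]
    rw [show βmax * ‖δ 0‖^2 / (1 - βmax) + 1 / (1 - βmax)^2 *
        ∑ t ∈ Finset.range T, (β (t+1))^2 * ‖G (t+1) - G t‖^2 =
        ((1 - βmax) * βmax * ‖δ 0‖^2 +
          ∑ t ∈ Finset.range T, (β (t+1))^2 * ‖G (t+1) - G t‖^2) / (1 - βmax)^2 by
      field_simp]
    exact (le_div_iff₀ hpos).2 (by linarith)
  -- rewrite Icc sums as range sums
  have hIccA : ∀ T : ℕ, ∑ t ∈ Finset.Icc 1 T, ‖δ t‖^2 =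
      ∑ t ∈ Finset.range T, ‖δ (t+1)‖^2 := by
    intro T
    rw [← Finset.Ico_add_one_right_eq_Icc, Finset.sum_Ico_eq_sum_range]
    exact Finset.sum_congr (by simp) fun i _ => by rw [add_comm]
  have hIccB : ∀ T : ℕ, ∑ t ∈ Finset.Icc 1 T, (β t)^2 * ‖G t - G (t-1)‖^2 =
      ∑ t ∈ Finset.range T, (β (t+1))^2 * ‖G (t+1) - G t‖^2 := by
    intro T
    rw [← Finset.Ico_add_one_right_eq_Icc, Finset.sum_Ico_eq_sum_range]
    refine Finset.sum_congr (by simp) fun i _ => by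
      rw [add_comm 1 i]
      simp
  set A : ℕ → ℝ := fun T : ℕ => (1 / (T : ℝ)) * ∑ t ∈ Finset.Icc 1 T, ‖δ t‖ ^ 2 with hA
  set B : ℕ → ℝ := fun T : ℕ =>
    (1 / (T : ℝ)) * ∑ t ∈ Finset.Icc 1 T, (β t) ^ 2 * ‖G t - G (t - 1)‖ ^ 2 with hB
  -- nonnegativity and boundedness
  have hA0 : ∀ T, 0 ≤ A T := by
    intro T
    apply mul_nonneg (by positivity)
    exact Finset.sum_nonneg fun i _ => sq_nonneg _
  have hB0 : ∀ T, 0 ≤ B T := by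
    intro T
    apply mul_nonneg (by positivity)
    exact Finset.sum_nonneg fun i _ => by positivity
  have hBbd : ∀ T, B T ≤ 4 * M^2 := by
    intro T
    rcases Nat.eq_zero_or_pos T with rfl | hT
    · simp only [hB, Nat.cast_zero, div_zero, Finset.Icc_self]
      norm_num
      positivity
    have hsum : ∑ t ∈ Finset.Icc 1 T, (β t)^2 * ‖G t - G (t-1)‖^2 ≤
        ∑ t ∈ Finset.Icc 1 T, 4 * M^2 := by
      apply Finset.sum_le_sum
      intro i _
      obtain ⟨hb0, hb1⟩ := hβ i
      have h1 : ‖G i - G (i-1)‖ ≤ 2 * M := by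
        calc ‖G i - G (i-1)‖ ≤ ‖G i‖ + ‖G (i-1)‖ := norm_sub_le _ _
          _ ≤ 2 * M := by linarith [hG i, hG (i-1)]
      have h2 : (β i)^2 ≤ 1 := by nlinarith
      have h3 : ‖G i - G (i-1)‖^2 ≤ 4 * M^2 := by nlinarith [norm_nonneg (G i - G (i-1))]
      calc (β i)^2 * ‖G i - G (i-1)‖^2 ≤ 1 * (4 * M^2) :=
            mul_le_mul h2 h3 (sq_nonneg _) one_pos.le
        _ = 4 * M^2 := one_mul _
    have hcard : ∑ t ∈ Finset.Icc 1 T, (4 : ℝ) * M^2 = T * (4 * M^2) := by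
      rw [Finset.sum_const, Nat.card_Icc]
      simp
    rw [hB]
    simp only
    calc (1 / (T : ℝ)) * ∑ t ∈ Finset.Icc 1 T, (β t)^2 * ‖G t - G (t-1)‖^2
        ≤ (1 / (T : ℝ)) * ((T : ℝ) * (4 * M^2)) := by
          apply mul_le_mul_of_nonneg_left _ (by positivity)
          rw [← hcard]; exact hsum
      _ = 4 * M^2 := by
          field_simp
  -- pointwise eventual bound
  have hpt : ∀ T : ℕ, 1 ≤ T → A T ≤ c0 * (1 / (T : ℝ)) + K2 * B T := by
    intro T hT
    have hTpos : (0:ℝ) < T := by exact_mod_cast hT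
    have h1 := Pbound T
    have h2 := mul_le_mul_of_nonneg_left h1 (by positivity : (0:ℝ) ≤ 1 / (T:ℝ))
    rw [hA, hB]
    simp only
    rw [hIccA, hIccB]
    calc (1 / (T:ℝ)) * ∑ t ∈ Finset.range T, ‖δ (t+1)‖^2
        ≤ (1 / (T:ℝ)) * (c0 + K2 * ∑ t ∈ Finset.range T, (β (t+1))^2 * ‖G (t+1) - G t‖^2) := h2
      _ = c0 * (1 / (T:ℝ)) + K2 * ((1 / (T:ℝ)) * ∑ t ∈ Finset.range T, (β (t+1))^2 * ‖G (t+1) - G t‖^2) := by ring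
  -- limsup manipulations
  set u : ℕ → ℝ := fun T => c0 * (1 / (T : ℝ)) with hu
  set v : ℕ → ℝ := fun T => K2 * B T with hv
  have hubd : ∀ T, u T ≤ c0 := by
    intro T
    rw [hu]
    simp only
    rcases Nat.eq_zero_or_pos T with rfl | hT
    · simp
      exact hc0n
    · have h1 : (1:ℝ)/(T:ℝ) ≤ 1 := by
        rw [div_le_one (by exact_mod_cast hT)]
        exact_mod_cast hT
      linarith [mul_le_mul_of_nonneg_left h1 hc0n]
  have hu0 : ∀ T, 0 ≤ u T := fun T => by positivity
  have hvbd : ∀ T, v T ≤ K2 * (4 * M^2) :=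
    fun T => mul_le_mul_of_nonneg_left (hBbd T) hK2n
  have hv0 : ∀ T, 0 ≤ v T := fun T => mul_nonneg hK2n (hB0 T)
  have hAcob : IsCoboundedUnder (· ≤ ·) atTop A :=
    (isBoundedUnder_of ⟨0, fun T => hA0 T⟩ :
      IsBoundedUnder (· ≥ ·) atTop A).isCoboundedUnder_le
  have hBbdd : IsBoundedUnder (· ≤ ·) atTop B := isBoundedUnder_of ⟨4 * M^2, hBbd⟩
  have hBcob : IsCoboundedUnder (· ≤ ·) atTop B :=
    (isBoundedUnder_of ⟨0, fun T => hB0 T⟩ :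
      IsBoundedUnder (· ≥ ·) atTop B).isCoboundedUnder_le
  have hstep1 : limsup A atTop ≤ limsup (u + v) atTop := by
    apply limsup_le_limsup
    · filter_upwards [eventually_ge_atTop 1] with T hT
      exact hpt T hT
    · exact hAcob
    · exact isBoundedUnder_of ⟨c0 + K2 * (4 * M^2),
        fun T => add_le_add (hubd T) (hvbd T)⟩
  have hstep2 : limsup (u + v) atTop ≤ limsup u atTop + limsup v atTop :=
    limsup_add_le
      (isBoundedUnder_of ⟨0, fun T => hu0 T⟩)
      (isBoundedUnder_of ⟨c0, hubd⟩)
      ((isBoundedUnder_of ⟨0, fun T => hv0 T⟩ :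
        IsBoundedUnder (· ≥ ·) atTop v).isCoboundedUnder_le)
      (isBoundedUnder_of ⟨K2 * (4 * M^2), hvbd⟩)
  have hlimu : limsup u atTop = 0 := by
    have : Tendsto u atTop (nhds 0) := by
      have h := (tendsto_one_div_atTop_nhds_zero_nat).const_mul c0
      rw [hu]
      simpa [one_div] using h
    exact this.limsup_eq
  have hlimv : limsup v atTop = K2 * limsup B atTop := by
    have hmono : Monotone (fun x : ℝ => K2 * x) :=
      fun x y h => mul_le_mul_of_nonneg_left h hK2n
    have := hmono.map_limsup_of_continuousAt B
      (Continuous.continuousAt (by continuity)) hBbdd hBcob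
    rw [hv]
    exact this.symm
  have hlimB0 : 0 ≤ limsup B atTop := by
    apply le_limsup_of_frequently_le _ hBbdd
    exact Frequently.of_forall fun T => hB0 T
  have hfin : K2 * limsup B atTop ≤ (2 / (1 - βmax)^2) * limsup B atTop := by
    apply mul_le_mul_of_nonneg_right _ hlimB0
    rw [hK2]
    gcongr
    norm_num
  calc limsup A atTop ≤ limsup (u + v) atTop := hstep1
    _ ≤ limsup u atTop + limsup v atTop := hstep2
    _ = K2 * limsup B atTop := by rw [hlimu, hlimv, zero_add]
    _ ≤ (2 / (1 - βmax)^2) * limsup B atTop := hfin
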